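/- arXiv:1506.03944 — 5 statements merged into one kernel-verified Lean document; each statement's English description precedes it below -/
import Mathlib

section
/- Let n ≥ 2. For every function δ : {(r,p) : 1 ≤ p ≤ r ≤ n} → {0,1} there exists an ordered set partition (A_1|…|A_t) of the linearly ordered set {1,…,n} such that the value δ(|A_1∪…∪A_{i(x)}|, rank of x in A_1∪…∪A_{i(x)}) is the same for all x ∈ {1,…,n}, where i(x) is the unique index with x ∈ A_{i(x)} and the rank of x in a set is its position in the increasing order of that set. Equivalently: every compliant binary labeling of the vertices of χ(Δ^{n−1}) has a monochromatic (n−1)-simplex, i.e., the Weak Symmetry Breaking task for n processes cannot be solved in one round, sb(n) ≥ 2. -/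
open Finset

/-- union of a list of finsets -/
def lunion {α : Type*} [DecidableEq α] (L : List (Finset α)) : Finset α := L.foldr (· ∪ ·) ∅

/-- `IsOSP A L` : `L` is an ordered set partition of the finite set `A`. -/
def IsOSP {α : Type*} [DecidableEq α] (A : Finset α) (L : List (Finset α)) : Prop :=
  (∀ B ∈ L, B.Nonempty) ∧ L.Pairwise (fun B C => Disjoint B C) ∧ lunion L = A

/-- `seenBlk L x` = `A_1 ∪ … ∪ A_{i(x)}`, the union of the blocks of `L` up to and
including the block containing `x`. -/
def seenBlk {α : Type*} [DecidableEq α] : List (Finset α) → α → Finset α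
  | [], _ => ∅
  | A :: rest, x => if x ∈ A then A else A ∪ seenBlk rest x

/-- rank (1-based position in the increasing order) of `x` in the finset `S`. -/
def rankIn (S : Finset ℕ) (x : ℕ) : ℕ := (S.filter (fun y => y ≤ x)).card

/-- the set `F(σ)` of flippable colors, for an ordered set partition of `[n] = {0,…,n}` -/
def Fset (n : ℕ) (L : List (Finset ℕ)) : Finset ℕ :=
  match L.getLast? with
  | some A => if A.card = 1 then Finset.range (n+1) \ A else Finset.range (n+1)
  | none => Finset.range (n+1)

/-- the flip `F(σ,x)` of an ordered set partition with respect to the color `x` -/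
def flipOSP (x : ℕ) : List (Finset ℕ) → List (Finset ℕ)
  | [] => []
  | A :: rest =>
    if x ∈ A then
      if 2 ≤ A.card then {x} :: A.erase x :: rest
      else
        match rest with
        | [] => [A]
        | B :: rest' => insert x B :: rest'
    else A :: flipOSP x rest

def levelAux : List ℕ → List (Finset ℕ) → Option ℕ
  | [], _ => none
  | _ :: _, [] => none
  | x :: xs, A :: As => if A = {x} then levelAux xs As else some x

/-- `levelFn Σ σ` = `level(σ,Σ)` (as an `Option`; `none` = undefined). -/
def levelFn (Sig : List ℕ) (L : List (Finset ℕ)) : Option ℕ :=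
  levelAux Sig.reverse L.reverse

/-- ordered set partitions of `[n] = {0,…,n}` -/
def OSPn (n : ℕ) : Type := {L : List (Finset ℕ) // IsOSP (Finset.range (n+1)) L}

/-- the graph `Γ_n`: vertices are the ordered set partitions of `[n]`, with `σ` and
`F(σ,x)` joined by an edge for every `x ∈ F(σ)`. -/
def Gamma (n : ℕ) : SimpleGraph (OSPn n) where
  Adj σ τ := σ ≠ τ ∧
    ((∃ x ∈ Fset n σ.1, τ.1 = flipOSP x σ.1) ∨ (∃ x ∈ Fset n τ.1, σ.1 = flipOSP x τ.1))
  symm := ⟨fun σ τ h => ⟨h.1.symm, h.2.symm⟩⟩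
  loopless := ⟨fun σ h => h.1 rfl⟩

/-- a matching: a set of edges of `G`, no two of which share a vertex -/
def IsMatchingSet {V : Type*} (G : SimpleGraph V) (M : Set (Sym2 V)) : Prop :=
  (∀ e ∈ M, e ∈ G.edgeSet) ∧ ∀ e ∈ M, ∀ f ∈ M, ∀ v : V, v ∈ e → v ∈ f → e = f

/-- a vertex is critical w.r.t. `M` if it lies in no edge of `M` -/
def CriticalVx {V : Type*} (M : Set (Sym2 V)) (v : V) : Prop := ∀ e ∈ M, v ∉ e

/-- the standard matching `M_Σ`, as a set of edges of `Γ_n` -/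
def MSigma (n : ℕ) (Sig : List ℕ) : Set (Sym2 (OSPn n)) :=
  {e | ∃ σ τ : OSPn n, ∃ x, levelFn Sig σ.1 = some x ∧ τ.1 = flipOSP x σ.1 ∧ e = s(σ, τ)}

/-- a list of edges is alternating w.r.t. `M` -/
def Alternates {V : Type*} (M : Set (Sym2 V)) (es : List (Sym2 V)) : Prop :=
  es.Chain' (fun e f => e ∈ M ↔ f ∉ M)

def IsProperlyAlternating {V : Type*} {G : SimpleGraph V} (M : Set (Sym2 V)) {u v : V}
    (p : G.Walk u v) : Prop :=
  Alternates M p.edges ∧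
  (∀ e, p.edges.head? = some e → e ∉ M → CriticalVx M u) ∧
  (∀ e, p.edges.getLast? = some e → e ∉ M → CriticalVx M v)

def IsSemiAugmenting {V : Type*} {G : SimpleGraph V} (M : Set (Sym2 V)) {u v : V}
    (p : G.Walk u v) : Prop :=
  IsProperlyAlternating M p ∧
  (∃ e, p.edges.head? = some e ∧ e ∈ M) ∧ (∃ e, p.edges.getLast? = some e ∧ e ∉ M)

def IsNonAugmenting {V : Type*} {G : SimpleGraph V} (M : Set (Sym2 V)) {u v : V}
    (p : G.Walk u v) : Prop :=
  Alternates M p.edges ∧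
  (∃ e, p.edges.head? = some e ∧ e ∈ M) ∧ (∃ e, p.edges.getLast? = some e ∧ e ∈ M)

def IsWeaklySemiAugmenting {V : Type*} {G : SimpleGraph V} (M : Set (Sym2 V)) {u v : V}
    (p : G.Walk u v) : Prop :=
  Alternates M p.edges ∧
  (p.edges = [] ∨
    ((∃ e, p.edges.head? = some e ∧ e ∈ M) ∧ (∃ e, p.edges.getLast? = some e ∧ e ∉ M)))

/-- a partial ordered set partition, as a list of pairs of blocks `(A_i, B_i)` -/
abbrev RawPOSP := List (Finset ℕ × Finset ℕ)

def carrierP (σ : RawPOSP) : Finset ℕ := (σ.map Prod.fst).foldr (· ∪ ·) ∅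
def colorsP (σ : RawPOSP) : Finset ℕ := (σ.map Prod.snd).foldr (· ∪ ·) ∅

/-- `σ` is a partial ordered set partition of `[n] = {0,…,n}` -/
def IsPOSP (n : ℕ) (σ : RawPOSP) : Prop :=
  σ ≠ [] ∧ (∀ p ∈ σ, p.2.Nonempty ∧ p.2 ⊆ p.1 ∧ p.1 ⊆ Finset.range (n+1)) ∧
  (σ.map Prod.fst).Pairwise (fun A B => Disjoint A B)

/-- view an ordered set partition as a partial one, with `B_i = A_i` -/
def toPairs (L : List (Finset ℕ)) : RawPOSP := L.map (fun A => (A, A))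

def dlAux (S : Finset ℕ) : Finset ℕ → RawPOSP → RawPOSP
  | _, [] => []
  | acc, (A, B) :: rest =>
    if B ⊆ S then dlAux S (acc ∪ A) rest
    else (acc ∪ A, B \ S) :: dlAux S ∅ rest

/-- the deletion `dl(σ, S)` -/
def dl (σ : RawPOSP) (S : Finset ℕ) : RawPOSP := dlAux S ∅ σ

/-- `D(σ, S)` = `A_i ∪ … ∪ A_t` for the minimal `i` with `B_i ∪ … ∪ B_t ⊆ S`, else `∅` -/
def Dfun (S : Finset ℕ) : RawPOSP → Finset ℕ
  | [] => ∅
  | b :: rest => if colorsP (b :: rest) ⊆ S then carrierP (b :: rest) else Dfun S rest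

def nodesAux : Finset ℕ → RawPOSP → Finset (Finset ℕ × ℕ)
  | _, [] => ∅
  | acc, (A, B) :: rest => B.image (fun x => (acc ∪ A, x)) ∪ nodesAux (acc ∪ A) rest

/-- the node set `V(σ)` of a partial ordered set partition -/
def nodesP (σ : RawPOSP) : Finset (Finset ℕ × ℕ) := nodesAux ∅ σ

/-- an ordered set partition of the whole of `[n]`, viewed as a partial one -/
def IsFullOSP (n : ℕ) (σ : RawPOSP) : Prop :=
  IsPOSP n σ ∧ carrierP σ = Finset.range (n+1) ∧ ∀ p ∈ σ, p.2 = p.1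

/-- simplices of the standard chromatic subdivision `χ(Δⁿ)` -/
def IsSimplexChi (n : ℕ) (W : Finset (Finset ℕ × ℕ)) : Prop :=
  ∃ σ : RawPOSP, IsFullOSP n σ ∧ W ⊆ nodesP σ

/-- a linked tuple of partial ordered set partitions -/
def Linked (T : List RawPOSP) : Prop := T.Chain' (fun σ τ => colorsP σ = carrierP τ)

/-- vertices of `χ^d(Δⁿ)`: linked `d`-tuples whose last entry has a singleton color set -/
def IsVertexChi (n d : ℕ) (v : List RawPOSP) : Prop :=
  v.length = d ∧ (∀ σ ∈ v, IsPOSP n σ) ∧ Linked v ∧ (colorsP (v.getLastD [])).card = 1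

/-- the `n`-simplices of `χ^d(Δⁿ)`: linked `d`-tuples of ordered set partitions of `[n]` -/
def IsTopSimplexChi (n d : ℕ) (T : List RawPOSP) : Prop :=
  T.length = d ∧ Linked T ∧
  ∀ σ ∈ T, IsPOSP n σ ∧ carrierP σ = Finset.range (n+1) ∧ ∀ p ∈ σ, p.2 = p.1

def faceAux : Finset ℕ → List RawPOSP → List RawPOSP
  | _, [] => []
  | S, σ :: rest => dl σ S :: faceAux (Dfun S σ) rest

/-- the face of the simplex `T` of `χ^d(Δⁿ)` determined by `S_d = S`:
`(dl(σ_1,S_1),…,dl(σ_d,S_d))` with `S_i = D(σ_{i+1},S_{i+1})`. -/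
def faceT (T : List RawPOSP) (S : Finset ℕ) : List RawPOSP := (faceAux S T.reverse).reverse

/-- the vertex of the `n`-simplex `T` colored `x` -/
def vertexOf (T : List RawPOSP) (x : ℕ) : List RawPOSP :=
  faceT T ((colorsP (T.getLastD [])) \ {x})

/-- relabel all elements by `f` -/
def relabel (f : ℕ → ℕ) (T : List RawPOSP) : List RawPOSP :=
  T.map (fun σ => σ.map (fun p => (p.1.image f, p.2.image f)))

/-- the unique order preserving bijection `I → J` (extended by the identity) -/
noncomputable def oMap (I J : Finset ℕ) (h : I.card = J.card) (x : ℕ) : ℕ :=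
  if hx : x ∈ I then ((J.orderIsoOfFin h.symm) ((I.orderIsoOfFin rfl).symm ⟨x, hx⟩) : ℕ)
  else x

/-- a compliant binary labeling of the vertices of `χ^d(Δⁿ)` -/
def Compliant (n d : ℕ) (lab : List RawPOSP → Bool) : Prop :=
  ∀ I J : Finset ℕ, I ⊆ Finset.range (n+1) → J ⊆ Finset.range (n+1) →
    ∀ h : I.card = J.card, ∀ v : List RawPOSP, IsVertexChi n d v →
      carrierP v.headI ⊆ I → lab (relabel (oMap I J h) v) = lab v

/-- the number of ordered set partitions of `[n] = {0,…,n}` -/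
noncomputable def fOSP (n : ℕ) : ℕ :=
  Nat.card {L : List (Finset ℕ) // IsOSP (Finset.range (n+1)) L}

/-- membership in the vertex set of `Γ_n(V)` -/
def InGammaV (V : Finset ℕ) (L : List (Finset ℕ)) : Prop :=
  ∃ A rest, L = A :: rest ∧ ¬ A ⊆ V

/-- a prefix in `V`: a tuple of nonempty pairwise disjoint subsets of `V` -/
def IsPrefixIn {α : Type*} [DecidableEq α] (V : Finset α) (P : List (Finset α)) : Prop :=
  (∀ A ∈ P, A.Nonempty ∧ A ⊆ V) ∧ P.Pairwise (fun A B => Disjoint A B)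

/-- membership in the vertex set of `Γ_n(V,𝒜)` -/
def InGammaVA (V : Finset ℕ) (P : List (Finset ℕ)) (L : List (Finset ℕ)) : Prop :=
  ∃ A rest, L = P ++ A :: rest ∧ ¬ A ⊆ V

/-- conducting bipartite graph of the first type -/
def ConductingFirst {V : Type*} (G : SimpleGraph V) (A B : Set V) : Prop :=
  A.ncard = B.ncard + 1 ∧
  ∀ v ∈ A, ∃ M : Set (Sym2 V), IsMatchingSet G M ∧ ∀ u, CriticalVx M u ↔ u = v

/-- conducting bipartite graph of the second type -/
def ConductingSecond {V : Type*} (G : SimpleGraph V) (A B : Set V) : Prop :=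
  A.ncard = B.ncard ∧
  ∀ v ∈ A, ∀ w ∈ B, ∃ M : Set (Sym2 V), IsMatchingSet G M ∧
    ∀ u, CriticalVx M u ↔ (u = v ∨ u = w)

/-- the vertex of the `n`-simplex `(As ‖ Bs)` of `χ²(Δⁿ)` colored `x` is internal -/
def InternalVx (n : ℕ) (As Bs : List (Finset ℕ)) (x : ℕ) : Prop :=
  carrierP (dl (toPairs As) (Finset.range (n+1) \ seenBlk Bs x)) = Finset.range (n+1)

namespace WSBaux

inductive Reach (m : ℕ → ℕ) : ℕ → Prop
  | zero : Reach m 0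
  | step (r r' : ℕ) (h1 : r' < r) (h2 : r ≤ r' + m r) (h : Reach m r') : Reach m r

def mcount (δ : ℕ → ℕ → Fin 2) (c : Fin 2) (r : ℕ) : ℕ :=
  ((Finset.Icc 1 r).filter (fun p => δ r p = c)).card

lemma mcount_add (δ : ℕ → ℕ → Fin 2) (r : ℕ) : mcount δ 0 r + mcount δ 1 r = r := by
  have h : ((Finset.Icc 1 r).filter (fun p => δ r p = 0)).card
      + ((Finset.Icc 1 r).filter (fun p => ¬ δ r p = 0)).card = (Finset.Icc 1 r).card :=
    Finset.card_filter_add_card_filter_not _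
  have he : (Finset.Icc 1 r).filter (fun p => ¬ δ r p = 0)
      = (Finset.Icc 1 r).filter (fun p => δ r p = 1) := by
    apply Finset.filter_congr
    intro p _
    rcases Fin.exists_fin_two.mp ⟨δ r p, rfl⟩ with h | h <;> simp [h]
  rw [he] at h
  simpa [mcount, Nat.card_Icc] using h

lemma reach_dichotomy (δ : ℕ → ℕ → Fin 2) :
    ∀ r, Reach (mcount δ 0) r ∨ Reach (mcount δ 1) r := by
  intro r
  induction r with
  | zero => exact Or.inl .zero
  | succ r ih =>
    have hsum := mcount_add δ (r+1)
    by_cases h0 : mcount δ 0 (r+1) = 0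
    · exact Or.inr (.step (r+1) 0 (Nat.succ_pos r) (by omega) .zero)
    by_cases h1 : mcount δ 1 (r+1) = 0
    · exact Or.inl (.step (r+1) 0 (Nat.succ_pos r) (by omega) .zero)
    rcases ih with h | h
    · exact Or.inl (.step (r+1) r (Nat.lt_succ_self r) (by omega) h)
    · exact Or.inr (.step (r+1) r (Nat.lt_succ_self r) (by omega) h)

lemma rankIn_pos {S : Finset ℕ} {x : ℕ} (hx : x ∈ S) : 1 ≤ rankIn S x :=
  Finset.card_pos.mpr ⟨x, Finset.mem_filter.mpr ⟨hx, le_refl x⟩⟩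

lemma rankIn_le (S : Finset ℕ) (x : ℕ) : rankIn S x ≤ S.card :=
  Finset.card_le_card (Finset.filter_subset _ _)

lemma rankIn_lt {S : Finset ℕ} {x y : ℕ} (hy : y ∈ S) (hxy : x < y) :
    rankIn S x < rankIn S y := by
  apply Finset.card_lt_card
  constructor
  · intro z hz
    rcases Finset.mem_filter.mp hz with ⟨hzS, hzx⟩
    exact Finset.mem_filter.mpr ⟨hzS, le_of_lt (lt_of_le_of_lt hzx hxy)⟩
  · intro hsub
    have := hsub (Finset.mem_filter.mpr ⟨hy, le_refl y⟩)
    have := (Finset.mem_filter.mp this).2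
    omega

lemma rankIn_injOn (S : Finset ℕ) : Set.InjOn (rankIn S) S := by
  intro x hx y hy hxy
  rcases lt_trichotomy x y with h | h | h
  · exact absurd hxy (Nat.ne_of_lt (rankIn_lt hy h))
  · exact h
  · exact absurd hxy.symm (Nat.ne_of_lt (rankIn_lt hx h))

lemma rankIn_image (S : Finset ℕ) : S.image (rankIn S) = Finset.Icc 1 S.card := by
  apply Finset.eq_of_subset_of_card_le
  · intro p hp
    rcases Finset.mem_image.mp hp with ⟨x, hx, rfl⟩
    exact Finset.mem_Icc.mpr ⟨rankIn_pos hx, rankIn_le S x⟩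
  · rw [Finset.card_image_of_injOn (rankIn_injOn S), Nat.card_Icc]
    omega

lemma lunion_append {α : Type*} [DecidableEq α] (L M : List (Finset α)) :
    lunion (L ++ M) = lunion L ∪ lunion M := by
  induction L with
  | nil => simp [lunion]
  | cons A rest ih =>
    simp only [lunion, List.foldr_cons, List.cons_append] at *
    rw [ih, Finset.union_assoc]

lemma subset_lunion {α : Type*} [DecidableEq α] {L : List (Finset α)} {A : Finset α}
    (hA : A ∈ L) : A ⊆ lunion L := by
  induction L with
  | nil => simp at hA
  | cons B rest ih =>
    rcases List.mem_cons.mp hA with rfl | h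
    · exact Finset.subset_union_left
    · exact (ih h).trans Finset.subset_union_right

lemma seenBlk_append_left {α : Type*} [DecidableEq α] {L : List (Finset α)} {x : α}
    (M : List (Finset α)) (hx : x ∈ lunion L) : seenBlk (L ++ M) x = seenBlk L x := by
  induction L with
  | nil => simp [lunion] at hx
  | cons A rest ih =>
    by_cases hA : x ∈ A
    · simp [seenBlk, hA]
    · have : x ∈ lunion rest := by
        rcases Finset.mem_union.mp hx with h | h
        · exact absurd h hA
        · exact h
      simp [seenBlk, hA, ih this]

lemma seenBlk_last {L : List (Finset ℕ)} {B : Finset ℕ} {x : ℕ}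
    (hx : x ∉ lunion L) (hxB : x ∈ B) : seenBlk (L ++ [B]) x = lunion L ∪ B := by
  induction L with
  | nil => simp [seenBlk, lunion, hxB]
  | cons A rest ih =>
    have hA : x ∉ A := fun h => hx (Finset.mem_union_left _ h)
    have hrest : x ∉ lunion rest := fun h => hx (Finset.mem_union_right _ h)
    simp only [List.cons_append, seenBlk, if_neg hA]
    rw [ih hrest]
    simp [lunion, Finset.union_assoc]

lemma construct (δ : ℕ → ℕ → Fin 2) (c : Fin 2) {r : ℕ} (hr : Reach (mcount δ c) r) :
    ∀ S : Finset ℕ, S.card = r →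
      ∃ L, IsOSP S L ∧ ∀ x ∈ S, δ (seenBlk L x).card (rankIn (seenBlk L x) x) = c := by
  induction hr with
  | zero =>
    intro S hS
    have : S = ∅ := Finset.card_eq_zero.mp hS
    subst this
    exact ⟨[], ⟨by simp, by simp, rfl⟩, by simp⟩
  | step r r' h1 h2 _ ih =>
    intro S hS
    have hk : r - r' ≤ mcount δ c r := by omega
    obtain ⟨R, hRsub, hRcard⟩ := Finset.exists_subset_card_eq hk
    set B : Finset ℕ := S.filter (fun x => rankIn S x ∈ R) with hBdef
    have hBS : B ⊆ S := Finset.filter_subset _ _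
    have hRIcc : R ⊆ Finset.Icc 1 r := hRsub.trans (Finset.filter_subset _ _)
    have himg : B.image (rankIn S) = R := by
      apply Finset.Subset.antisymm
      · intro p hp
        rcases Finset.mem_image.mp hp with ⟨x, hx, rfl⟩
        exact (Finset.mem_filter.mp hx).2
      · intro p hp
        have : p ∈ S.image (rankIn S) := by rw [rankIn_image, hS]; exact hRIcc hp
        rcases Finset.mem_image.mp this with ⟨x, hx, rfl⟩
        exact Finset.mem_image.mpr ⟨x, Finset.mem_filter.mpr ⟨hx, hp⟩, rfl⟩
    have hBcard : B.card = r - r' := by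
      rw [← hRcard, ← himg]
      exact (Finset.card_image_of_injOn ((rankIn_injOn S).mono (by exact_mod_cast hBS))).symm
    set S' : Finset ℕ := S \ B with hS'def
    have hS'card : S'.card = r' := by
      rw [hS'def, Finset.card_sdiff_of_subset hBS, hS, hBcard]; omega
    obtain ⟨L', ⟨hne', hpw', hlu'⟩, hlab'⟩ := ih S' hS'card
    refine ⟨L' ++ [B], ⟨?_, ?_, ?_⟩, ?_⟩
    · intro C hC
      rcases List.mem_append.mp hC with h | h
      · exact hne' C h
      · simp at h; subst h
        exact Finset.card_pos.mp (by omega)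
    · refine List.pairwise_append.mpr ⟨hpw', List.pairwise_singleton _ _, ?_⟩
      intro A hA C hC
      simp only [List.mem_singleton] at hC; subst hC
      have : A ⊆ S' := hlu' ▸ subset_lunion hA
      exact Finset.disjoint_of_subset_left this Finset.sdiff_disjoint
    · rw [lunion_append, hlu']
      simp [lunion, hS'def, Finset.sdiff_union_of_subset hBS]
    · intro x hx
      by_cases hxB : x ∈ B
      · have hxS' : x ∉ lunion L' := by
          rw [hlu', hS'def]; simp [hxB]
        rw [seenBlk_last hxS' hxB, hlu']
        have hSeq : S' ∪ B = S := by rw [hS'def]; exact Finset.sdiff_union_of_subset hBS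
        rw [hSeq, hS]
        have hp : rankIn S x ∈ R := (Finset.mem_filter.mp hxB).2
        exact (Finset.mem_filter.mp (hRsub hp)).2
      · have hxS' : x ∈ lunion L' := by
          rw [hlu', hS'def]; exact Finset.mem_sdiff.mpr ⟨hx, hxB⟩
        rw [seenBlk_append_left _ hxS']
        exact hlab' x (hlu' ▸ hxS')

end WSBaux

/-- For every `n ≥ 2` and every `δ`, there is an ordered set partition of `{1,…,n}`
on which the induced labeling `x ↦ δ(|A_1∪…∪A_{i(x)}|, rank of x therein)` is constant:
Weak Symmetry Breaking cannot be solved in one round, `sb(n) ≥ 2`. -/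
theorem statement1 (n : ℕ) (hn : 2 ≤ n) (δ : ℕ → ℕ → Fin 2) :
    ∃ L : List (Finset ℕ), IsOSP (Finset.Icc 1 n) L ∧
      ∃ c : Fin 2, ∀ x ∈ Finset.Icc 1 n,
        δ (seenBlk L x).card (rankIn (seenBlk L x) x) = c := by
  have hcard : (Finset.Icc 1 n).card = n := by rw [Nat.card_Icc]; omega
  rcases WSBaux.reach_dichotomy δ n with h | h
  · obtain ⟨L, hOSP, hlab⟩ := WSBaux.construct δ 0 h (Finset.Icc 1 n) hcard
    exact ⟨L, hOSP, 0, hlab⟩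
  · obtain ⟨L, hOSP, hlab⟩ := WSBaux.construct δ 1 h (Finset.Icc 1 n) hcard
    exact ⟨L, hOSP, 1, hlab⟩
end

section
/- Let σ be a partial ordered set partition of [n]. (1) For every nonempty S ⊊ C(σ), the deletion dl(σ,S) is again a partial ordered set partition of [n] satisfying: (a) C(dl(σ,S)) = C(σ)∖S; (b) dim dl(σ,S) = dim σ − |S|; (c) carrier(dl(σ,S)) ⊆ carrier(σ). (2) If S and T are disjoint nonempty subsets of C(σ) with S∪T ≠ C(σ), then dl(dl(σ,S),T) = dl(σ, S∪T). -/
open Finset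

lemma carrierP_cons (p : Finset ℕ × Finset ℕ) (l : RawPOSP) :
    carrierP (p :: l) = p.1 ∪ carrierP l := rfl

lemma colorsP_cons (p : Finset ℕ × Finset ℕ) (l : RawPOSP) :
    colorsP (p :: l) = p.2 ∪ colorsP l := rfl

lemma fst_subset_carrierP {p : Finset ℕ × Finset ℕ} {l : RawPOSP} (h : p ∈ l) :
    p.1 ⊆ carrierP l := by
  induction l with
  | nil => simp at h
  | cons q t ih =>
    rw [carrierP_cons]
    rcases List.mem_cons.1 h with h | h
    · subst h; exact Finset.subset_union_left
    · exact (ih h).trans Finset.subset_union_right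

lemma disjoint_carrierP {X : Finset ℕ} {l : RawPOSP}
    (h : ∀ p ∈ l, Disjoint X p.1) : Disjoint X (carrierP l) := by
  induction l with
  | nil => simp [carrierP, colorsP]
  | cons q t ih =>
    rw [carrierP_cons, Finset.disjoint_union_right]
    exact ⟨h q List.mem_cons_self, ih fun p hp => h p (List.mem_cons_of_mem _ hp)⟩

lemma colorsP_dlAux (S : Finset ℕ) (σ : RawPOSP) :
    ∀ acc, colorsP (dlAux S acc σ) = colorsP σ \ S := by
  induction σ with
  | nil => intro acc; simp [dlAux, colorsP]
  | cons p t ih =>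
    intro acc
    obtain ⟨A, B⟩ := p
    rw [colorsP_cons]
    by_cases h : B ⊆ S
    · rw [dlAux, if_pos h, ih, Finset.union_sdiff_distrib,
        Finset.sdiff_eq_empty_iff_subset.2 h, Finset.empty_union]
    · rw [dlAux, if_neg h, colorsP_cons, ih, Finset.union_sdiff_distrib]

lemma carrierP_dlAux (S : Finset ℕ) (σ : RawPOSP) :
    ∀ acc, carrierP (dlAux S acc σ) ⊆ acc ∪ carrierP σ := by
  induction σ with
  | nil => intro acc; simp [dlAux, carrierP]
  | cons p t ih =>
    intro acc
    obtain ⟨A, B⟩ := p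
    rw [carrierP_cons]
    by_cases h : B ⊆ S
    · rw [dlAux, if_pos h]
      refine (ih (acc ∪ A)).trans ?_
      rw [Finset.union_assoc]
    · rw [dlAux, if_neg h, carrierP_cons]
      refine Finset.union_subset ?_ ?_
      · exact Finset.union_subset_union_right Finset.subset_union_left
      · refine (ih ∅).trans ?_
        simp only [Finset.empty_union]
        exact Finset.subset_union_right.trans
          (Finset.union_subset_union_right Finset.subset_union_right)

lemma props_dlAux (n : ℕ) (S : Finset ℕ) (σ : RawPOSP) :
    ∀ acc, (∀ p ∈ σ, p.2.Nonempty ∧ p.2 ⊆ p.1 ∧ p.1 ⊆ Finset.range (n+1)) →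
      acc ⊆ Finset.range (n+1) →
      ∀ p ∈ dlAux S acc σ, p.2.Nonempty ∧ p.2 ⊆ p.1 ∧ p.1 ⊆ Finset.range (n+1) := by
  induction σ with
  | nil => intro acc _ _ p hp; simp [dlAux] at hp
  | cons q t ih =>
    intro acc hσ hacc p hp
    obtain ⟨A, B⟩ := q
    have hq := hσ (A, B) List.mem_cons_self
    have ht : ∀ p ∈ t, p.2.Nonempty ∧ p.2 ⊆ p.1 ∧ p.1 ⊆ Finset.range (n+1) :=
      fun p hp => hσ p (List.mem_cons_of_mem _ hp)
    by_cases h : B ⊆ S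
    · rw [dlAux, if_pos h] at hp
      exact ih (acc ∪ A) ht (Finset.union_subset hacc hq.2.2) p hp
    · rw [dlAux, if_neg h] at hp
      rcases List.mem_cons.1 hp with hp | hp
      · subst hp
        refine ⟨?_, ?_, Finset.union_subset hacc hq.2.2⟩
        · rcases Finset.not_subset.1 h with ⟨x, hx1, hx2⟩
          exact ⟨x, Finset.mem_sdiff.2 ⟨hx1, hx2⟩⟩
        · exact (Finset.sdiff_subset.trans hq.2.1).trans Finset.subset_union_right
      · exact ih ∅ ht (Finset.empty_subset _) p hp

lemma pairwise_dlAux (S : Finset ℕ) (σ : RawPOSP) :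
    ∀ acc, (σ.map Prod.fst).Pairwise (fun A B => Disjoint A B) →
      (∀ p ∈ σ, Disjoint acc p.1) →
      ((dlAux S acc σ).map Prod.fst).Pairwise (fun A B => Disjoint A B) := by
  induction σ with
  | nil => intro acc _ _; simp [dlAux]
  | cons q t ih =>
    intro acc hσ hacc
    obtain ⟨A, B⟩ := q
    rw [List.map_cons, List.pairwise_cons] at hσ
    have hAt : ∀ p ∈ t, Disjoint A p.1 := by
      intro p hp; exact hσ.1 p.1 (List.mem_map_of_mem hp)
    have hacct : ∀ p ∈ t, Disjoint acc p.1 :=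
      fun p hp => hacc p (List.mem_cons_of_mem _ hp)
    by_cases h : B ⊆ S
    · rw [dlAux, if_pos h]
      exact ih (acc ∪ A) hσ.2 (fun p hp =>
        Finset.disjoint_union_left.2 ⟨hacct p hp, hAt p hp⟩)
    · rw [dlAux, if_neg h, List.map_cons, List.pairwise_cons]
      refine ⟨?_, ih ∅ hσ.2 (fun p hp => Finset.disjoint_empty_left _)⟩
      intro C hC
      rcases List.mem_map.1 hC with ⟨p, hp, rfl⟩
      have hsub : p.1 ⊆ carrierP t := by
        have h1 := fst_subset_carrierP hp
        have h2 := carrierP_dlAux S t ∅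
        exact h1.trans (h2.trans (by simp))
      have : Disjoint (acc ∪ A) (carrierP t) :=
        disjoint_carrierP (fun p hp =>
          Finset.disjoint_union_left.2 ⟨hacct p hp, hAt p hp⟩)
      exact this.mono_right hsub

lemma dlAux_dlAux (S T : Finset ℕ) (σ : RawPOSP) :
    ∀ C D, dlAux T C (dlAux S D σ) = dlAux (S ∪ T) (C ∪ D) σ := by
  induction σ with
  | nil => intro C D; simp [dlAux]
  | cons p t ih =>
    intro C D
    obtain ⟨A, B⟩ := p
    by_cases h1 : B ⊆ S
    · have h2 : B ⊆ S ∪ T := h1.trans Finset.subset_union_left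
      rw [dlAux, if_pos h1, dlAux, if_pos h2, ih, Finset.union_assoc]
    · by_cases h2 : B \ S ⊆ T
      · have h3 : B ⊆ S ∪ T := by
          intro x hx
          by_cases hxS : x ∈ S
          · exact Finset.mem_union_left _ hxS
          · exact Finset.mem_union_right _ (h2 (Finset.mem_sdiff.2 ⟨hx, hxS⟩))
        rw [dlAux, if_neg h1, dlAux, if_pos h2, dlAux, if_pos h3, ih]
        congr 1
        rw [Finset.union_empty, Finset.union_assoc]
      · have h3 : ¬ B ⊆ S ∪ T := by
          intro hc
          exact h2 (fun x hx => by
            rcases Finset.mem_sdiff.1 hx with ⟨hxB, hxS⟩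
            rcases Finset.mem_union.1 (hc hxB) with h | h
            · exact absurd h hxS
            · exact h)
        rw [dlAux, if_neg h1, dlAux, if_neg h2, dlAux, if_neg h3, ih]
        have hd : (B \ S) \ T = B \ (S ∪ T) := by
          ext x; simp only [Finset.mem_sdiff, Finset.mem_union]; tauto
        rw [Finset.union_empty, Finset.union_assoc, hd]

/-- Properties of the deletion operation on partial ordered set partitions. -/
theorem statement3 (n : ℕ) (σ : RawPOSP) (hσ : IsPOSP n σ) :
    (∀ S : Finset ℕ, S.Nonempty → S ⊂ colorsP σ →
      IsPOSP n (dl σ S) ∧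
      colorsP (dl σ S) = colorsP σ \ S ∧
      ((colorsP (dl σ S)).card : ℤ) - 1 = ((colorsP σ).card : ℤ) - 1 - S.card ∧
      carrierP (dl σ S) ⊆ carrierP σ) ∧
    (∀ S T : Finset ℕ, S.Nonempty → T.Nonempty → Disjoint S T →
      S ⊆ colorsP σ → T ⊆ colorsP σ → S ∪ T ≠ colorsP σ →
      dl (dl σ S) T = dl σ (S ∪ T)) := by
  obtain ⟨hne, hprops, hpw⟩ := hσ
  constructor
  · intro S hSne hSss
    have hcol : colorsP (dl σ S) = colorsP σ \ S := colorsP_dlAux S σ ∅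
    have hcar : carrierP (dl σ S) ⊆ carrierP σ := by
      have := carrierP_dlAux S σ ∅
      simpa [dl] using this
    refine ⟨⟨?_, ?_, ?_⟩, hcol, ?_, hcar⟩
    · intro hc
      obtain ⟨x, hx1, hx2⟩ := Finset.exists_of_ssubset hSss
      have : x ∈ colorsP (dl σ S) := hcol ▸ Finset.mem_sdiff.2 ⟨hx1, hx2⟩
      rw [hc] at this
      simp [colorsP] at this
    · exact props_dlAux n S σ ∅ hprops (Finset.empty_subset _)
    · exact pairwise_dlAux S σ ∅ hpw (fun p _ => Finset.disjoint_empty_left _)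
    · have h1 := Finset.card_sdiff_of_subset hSss.subset
      have h2 := Finset.card_le_card hSss.subset
      rw [hcol, h1]
      omega
  · intro S T _ _ _ _ _ _
    have := dlAux_dlAux S T σ ∅ ∅
    rw [Finset.union_empty] at this
    exact this
end

section
/- If σ and τ are partial ordered set partitions of [n] with equal node sets V(σ) = V(τ), then σ = τ. -/
open Finset

lemma mem_nodesAux_cons {s : Finset ℕ × ℕ} {c A B : Finset ℕ} {rest : RawPOSP} :
    s ∈ nodesAux c ((A, B) :: rest) ↔ (∃ x ∈ B, s = (c ∪ A, x)) ∨ s ∈ nodesAux (c ∪ A) rest := by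
  simp [nodesAux, eq_comm]

lemma subset_of_mem_nodesAux {c : Finset ℕ} {L : RawPOSP} :
    ∀ s ∈ nodesAux c L, c ⊆ s.1 := by
  induction L generalizing c with
  | nil => intro s hs; simp [nodesAux] at hs
  | cons p rest ih =>
    obtain ⟨A, B⟩ := p
    intro s hs
    rcases mem_nodesAux_cons.1 hs with ⟨x, _, rfl⟩ | hs
    · exact Finset.subset_union_left
    · exact Finset.subset_union_left.trans (ih _ hs)

lemma firstBlock_subset {c A B : Finset ℕ} {rest : RawPOSP} :
    ∀ s ∈ nodesAux c ((A, B) :: rest), c ∪ A ⊆ s.1 := by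
  intro s hs
  rcases mem_nodesAux_cons.1 hs with ⟨x, _, rfl⟩ | hs
  · exact subset_rfl
  · exact subset_of_mem_nodesAux _ hs

lemma not_fst_eq_of_mem_tail {c A : Finset ℕ} {rest : RawPOSP}
    (hne : ∀ p ∈ rest, p.2.Nonempty ∧ p.2 ⊆ p.1)
    (hd : ∀ p ∈ rest, Disjoint (c ∪ A) p.1) :
    ∀ s ∈ nodesAux (c ∪ A) rest, s.1 ≠ c ∪ A := by
  intro s hs heq
  cases rest with
  | nil => simp [nodesAux] at hs
  | cons q r =>
    obtain ⟨A₁, B₁⟩ := q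
    have h1 : (c ∪ A) ∪ A₁ ⊆ s.1 := firstBlock_subset _ hs
    have h2 : A₁ ⊆ c ∪ A := by
      rw [heq] at h1; exact Finset.union_subset_right h1
    have h3 : Disjoint (c ∪ A) A₁ := hd _ (List.mem_cons_self)
    obtain ⟨⟨x, hx⟩, hsub⟩ := hne _ (List.mem_cons_self)
    exact Finset.disjoint_left.1 h3 (h2 (hsub hx)) (hsub hx)

lemma eq_nil_of_nodesAux_empty {c : Finset ℕ} {L : RawPOSP}
    (hne : ∀ p ∈ L, p.2.Nonempty) (h : nodesAux c L = ∅) : L = [] := by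
  cases L with
  | nil => rfl
  | cons p rest =>
    obtain ⟨A, B⟩ := p
    obtain ⟨x, hx⟩ := hne _ (List.mem_cons_self)
    have : ((c ∪ A, x) : Finset ℕ × ℕ) ∈ nodesAux c ((A, B) :: rest) :=
      mem_nodesAux_cons.2 (Or.inl ⟨x, hx, rfl⟩)
    rw [h] at this; simp at this

lemma nodesAux_inj (σ : RawPOSP) : ∀ (τ : RawPOSP) (acc : Finset ℕ),
    (∀ p ∈ σ, p.2.Nonempty ∧ p.2 ⊆ p.1) → (∀ p ∈ τ, p.2.Nonempty ∧ p.2 ⊆ p.1) →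
    σ.Pairwise (fun p q => Disjoint p.1 q.1) → τ.Pairwise (fun p q => Disjoint p.1 q.1) →
    (∀ p ∈ σ, Disjoint acc p.1) → (∀ p ∈ τ, Disjoint acc p.1) →
    nodesAux acc σ = nodesAux acc τ → σ = τ := by
  induction σ with
  | nil =>
    intro τ acc _ hτ _ _ _ _ h
    exact (eq_nil_of_nodesAux_empty (fun p hp => (hτ p hp).1) h.symm).symm
  | cons p rest ih =>
    intro τ acc hσ hτ hpσ hpτ hdσ hdτ h
    obtain ⟨A, B⟩ := p
    cases τ with
    | nil =>
      exact absurd (eq_nil_of_nodesAux_empty (fun q hq => (hσ q hq).1) h) (by simp)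
    | cons q rest' =>
      obtain ⟨A', B'⟩ := q
      -- invariants
      have hB : B.Nonempty := (hσ _ (List.mem_cons_self)).1
      have hBA : B ⊆ A := (hσ _ (List.mem_cons_self)).2
      have hB' : B'.Nonempty := (hτ _ (List.mem_cons_self)).1
      have hBA' : B' ⊆ A' := (hτ _ (List.mem_cons_self)).2
      have hdA : Disjoint acc A := hdσ _ (List.mem_cons_self)
      have hdA' : Disjoint acc A' := hdτ _ (List.mem_cons_self)
      have hdrest : ∀ p ∈ rest, Disjoint (acc ∪ A) p.1 := by
        intro p hp
        exact Finset.disjoint_union_left.2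
          ⟨hdσ _ (List.mem_cons_of_mem _ hp), (List.pairwise_cons.1 hpσ).1 _ hp⟩
      have hdrest' : ∀ p ∈ rest', Disjoint (acc ∪ A') p.1 := by
        intro p hp
        exact Finset.disjoint_union_left.2
          ⟨hdτ _ (List.mem_cons_of_mem _ hp), (List.pairwise_cons.1 hpτ).1 _ hp⟩
      have hσrest : ∀ p ∈ rest, p.2.Nonempty ∧ p.2 ⊆ p.1 :=
        fun p hp => hσ _ (List.mem_cons_of_mem _ hp)
      have hτrest : ∀ p ∈ rest', p.2.Nonempty ∧ p.2 ⊆ p.1 :=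
        fun p hp => hτ _ (List.mem_cons_of_mem _ hp)
      -- step 1 : acc ∪ A = acc ∪ A'
      have hAA' : acc ∪ A = acc ∪ A' := by
        obtain ⟨x, hx⟩ := hB
        have hmem : ((acc ∪ A, x) : Finset ℕ × ℕ) ∈ nodesAux acc ((A', B') :: rest') := by
          rw [← h]; exact mem_nodesAux_cons.2 (Or.inl ⟨x, hx, rfl⟩)
        have h1 : acc ∪ A' ⊆ acc ∪ A := firstBlock_subset _ hmem
        obtain ⟨y, hy⟩ := hB'
        have hmem' : ((acc ∪ A', y) : Finset ℕ × ℕ) ∈ nodesAux acc ((A, B) :: rest) := by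
          rw [h]; exact mem_nodesAux_cons.2 (Or.inl ⟨y, hy, rfl⟩)
        exact subset_antisymm (firstBlock_subset _ hmem') h1
      have hA : A = A' := by
        have := congrArg (· \ acc) hAA'
        simpa [Finset.union_sdiff_cancel_left hdA, Finset.union_sdiff_cancel_left hdA',
          Finset.union_comm] using this
      subst hA
      -- step 2 : B = B'
      have hBB' : B = B' := by
        ext x
        constructor
        · intro hx
          have hmem : ((acc ∪ A, x) : Finset ℕ × ℕ) ∈ nodesAux acc ((A, B') :: rest') := by
            rw [← h]; exact mem_nodesAux_cons.2 (Or.inl ⟨x, hx, rfl⟩)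
          rcases mem_nodesAux_cons.1 hmem with ⟨y, hy, he⟩ | hmem
          · rw [(Prod.mk.inj he).2]; exact hy
          · exact absurd rfl (not_fst_eq_of_mem_tail hτrest hdrest' _ hmem)
        · intro hx
          have hmem : ((acc ∪ A, x) : Finset ℕ × ℕ) ∈ nodesAux acc ((A, B) :: rest) := by
            rw [h]; exact mem_nodesAux_cons.2 (Or.inl ⟨x, hx, rfl⟩)
          rcases mem_nodesAux_cons.1 hmem with ⟨y, hy, he⟩ | hmem
          · rw [(Prod.mk.inj he).2]; exact hy
          · exact absurd rfl (not_fst_eq_of_mem_tail hσrest hdrest _ hmem)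
      subst hBB'
      -- step 3 : tails have equal node sets
      have htail : nodesAux (acc ∪ A) rest = nodesAux (acc ∪ A) rest' := by
        ext s
        constructor
        · intro hs
          have hs' : s ∈ nodesAux acc ((A, B) :: rest') := by
            rw [← h]; exact mem_nodesAux_cons.2 (Or.inr hs)
          rcases mem_nodesAux_cons.1 hs' with ⟨x, hx, rfl⟩ | hs'
          · exact absurd rfl (not_fst_eq_of_mem_tail hσrest hdrest _ hs)
          · exact hs'
        · intro hs
          have hs' : s ∈ nodesAux acc ((A, B) :: rest) := by
            rw [h]; exact mem_nodesAux_cons.2 (Or.inr hs)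
          rcases mem_nodesAux_cons.1 hs' with ⟨x, hx, rfl⟩ | hs'
          · exact absurd rfl (not_fst_eq_of_mem_tail hτrest hdrest' _ hs)
          · exact hs'
      have := ih rest' (acc ∪ A) hσrest hτrest (List.pairwise_cons.1 hpσ).2
        (List.pairwise_cons.1 hpτ).2 hdrest hdrest' htail
      rw [this]

/-- A partial ordered set partition of `[n]` is determined by its node set. -/
theorem statement4 (n : ℕ) (σ τ : RawPOSP) (hσ : IsPOSP n σ) (hτ : IsPOSP n τ)
    (h : nodesP σ = nodesP τ) : σ = τ := by
  exact nodesAux_inj σ τ ∅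
    (fun p hp => ⟨(hσ.2.1 p hp).1, (hσ.2.1 p hp).2.1⟩)
    (fun p hp => ⟨(hτ.2.1 p hp).1, (hτ.2.1 p hp).2.1⟩)
    (List.pairwise_map.1 hσ.2.2) (List.pairwise_map.1 hτ.2.2)
    (fun p _ => Finset.disjoint_empty_left _) (fun p _ => Finset.disjoint_empty_left _) h
end

section
/- Let σ be an ordered set partition of [n] and x ∈ F(σ). Then the flip F(σ,x) is a well-defined ordered set partition of [n], x ∈ F(F(σ,x)), and F(F(σ,x),x) = σ. Moreover σ and F(σ,x), viewed as n-simplices of χ(Δⁿ), share the common (n−1)-dimensional face dl(σ,{x}) = dl(F(σ,x),{x}). -/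
open Finset

namespace Aux8

lemma lunion_cons {α : Type*} [DecidableEq α] (A : Finset α) (L : List (Finset α)) :
    lunion (A :: L) = A ∪ lunion L := rfl

lemma lunion_nil {α : Type*} [DecidableEq α] : lunion ([] : List (Finset α)) = ∅ := rfl

lemma subset_lunion {α : Type*} [DecidableEq α] {B : Finset α} :
    ∀ {L : List (Finset α)}, B ∈ L → B ⊆ lunion L := by
  intro L
  induction L with
  | nil => simp
  | cons A rest ih =>
    intro h
    rcases List.mem_cons.mp h with h | h
    · subst h; rw [lunion_cons]; exact Finset.subset_union_left
    · rw [lunion_cons]; exact (ih h).trans Finset.subset_union_right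

lemma disjoint_lunion {α : Type*} [DecidableEq α] {s : Finset α} :
    ∀ {L : List (Finset α)}, (∀ B ∈ L, Disjoint s B) → Disjoint s (lunion L) := by
  intro L
  induction L with
  | nil => intro _; simp [lunion_nil]
  | cons A rest ih =>
    intro h
    rw [lunion_cons, Finset.disjoint_union_right]
    exact ⟨h A (by simp), ih fun B hB => h B (by simp [hB])⟩

/-- combined hypotheses we carry around -/
def Good (x : ℕ) (L : List (Finset ℕ)) : Prop :=
  (∀ B ∈ L, B.Nonempty) ∧ L.Pairwise (fun B C => Disjoint B C) ∧ x ∈ lunion L ∧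
  ∀ A, L.getLast? = some A → A ≠ ({x} : Finset ℕ)

lemma flip_mem_big {x : ℕ} {A : Finset ℕ} (rest) (hx : x ∈ A) (h2 : 2 ≤ A.card) :
    flipOSP x (A :: rest) = {x} :: A.erase x :: rest := by simp [flipOSP, hx, h2]

lemma flip_singl {x : ℕ} (B : Finset ℕ) (rest') :
    flipOSP x ({x} :: B :: rest') = insert x B :: rest' := by simp [flipOSP]

lemma flip_nmem {x : ℕ} {A : Finset ℕ} (rest) (hx : x ∉ A) :
    flipOSP x (A :: rest) = A :: flipOSP x rest := by simp [flipOSP, hx]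

lemma flip_ne_nil {x : ℕ} {L : List (Finset ℕ)} (h : L ≠ []) : flipOSP x L ≠ [] := by
  match L with
  | [] => exact absurd rfl h
  | A :: rest =>
    by_cases hx : x ∈ A
    · by_cases h2 : 2 ≤ A.card
      · rw [flip_mem_big rest hx h2]; simp
      · match rest with
        | [] => simp [flipOSP, hx, h2]
        | B :: rest' => simp [flipOSP, hx, h2]
    · rw [flip_nmem rest hx]; simp

lemma getLast?_cons_ne {α : Type*} (A : α) {rest : List α} (h : rest ≠ []) :
    (A :: rest).getLast? = rest.getLast? := by
  match rest with
  | [] => exact absurd rfl h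
  | B :: r => exact List.getLast?_cons_cons

lemma eq_singleton_of_small {x : ℕ} {A : Finset ℕ} (hx : x ∈ A) (h2 : ¬ 2 ≤ A.card) :
    A = {x} := by
  have h1 : A.card = 1 := le_antisymm (by omega) (Finset.card_pos.mpr ⟨x, hx⟩)
  obtain ⟨a, ha⟩ := Finset.card_eq_one.mp h1
  rw [ha] at hx ⊢
  rw [Finset.mem_singleton.mp hx]

lemma good_tail {x : ℕ} {A : Finset ℕ} {rest : List (Finset ℕ)}
    (hg : Good x (A :: rest)) (hx : x ∉ A) : Good x rest := by
  obtain ⟨hne, hpw, hmem, hlast⟩ := hg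
  have hmem' : x ∈ lunion rest := by
    rw [lunion_cons, Finset.mem_union] at hmem
    tauto
  have hrne : rest ≠ [] := by
    intro h; subst h; simp [lunion_nil] at hmem'
  refine ⟨fun B hB => hne B (by simp [hB]), (List.pairwise_cons.mp hpw).2, hmem', ?_⟩
  intro B hB
  apply hlast
  rw [getLast?_cons_ne A hrne]
  exact hB

lemma flip_good {x : ℕ} : ∀ {L : List (Finset ℕ)}, Good x L →
    (∀ B ∈ flipOSP x L, B.Nonempty) ∧
    (flipOSP x L).Pairwise (fun B C => Disjoint B C) ∧
    lunion (flipOSP x L) = lunion L := by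
  intro L
  induction L with
  | nil => intro _; simp [flipOSP, lunion_nil]
  | cons A rest ih =>
    intro hg
    obtain ⟨hne, hpw, hmem, hlast⟩ := hg
    have hArest : ∀ B ∈ rest, Disjoint A B := (List.pairwise_cons.mp hpw).1
    by_cases hx : x ∈ A
    · by_cases h2 : 2 ≤ A.card
      · rw [flip_mem_big rest hx h2]
        have hen : (A.erase x).Nonempty := by
          rw [← Finset.card_pos, Finset.card_erase_of_mem hx]; omega
        have hxd : Disjoint ({x} : Finset ℕ) (A.erase x) := by
          simp [Finset.disjoint_singleton_left]
        refine ⟨?_, ?_, ?_⟩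
        · intro B hB
          rcases List.mem_cons.mp hB with h | h
          · subst h; exact Finset.singleton_nonempty x
          rcases List.mem_cons.mp h with h | h
          · subst h; exact hen
          · exact hne B (by simp [h])
        · rw [List.pairwise_cons, List.pairwise_cons]
          refine ⟨?_, ?_, (List.pairwise_cons.mp hpw).2⟩
          · intro B hB
            rcases List.mem_cons.mp hB with h | h
            · subst h; exact hxd
            · exact Finset.disjoint_singleton_left.mpr
                (Finset.disjoint_left.mp (hArest B h) hx)
          · intro B hB
            exact (hArest B hB).mono_left (Finset.erase_subset x A)
        · rw [lunion_cons, lunion_cons, lunion_cons, ← Finset.union_assoc,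
            ← Finset.insert_eq, Finset.insert_erase hx]
      · have hA : A = {x} := eq_singleton_of_small hx h2
        subst hA
        match rest with
        | [] => exact absurd (hlast {x} rfl) (by simp)
        | B :: rest' =>
          rw [flip_singl B rest']
          have hxB : x ∉ B := Finset.disjoint_left.mp (hArest B (by simp)) hx
          have hBrest : ∀ C ∈ rest', Disjoint B C := by
            intro C hC
            exact ((List.pairwise_cons.mp (List.pairwise_cons.mp hpw).2).1) C hC
          refine ⟨?_, ?_, ?_⟩
          · intro C hC
            rcases List.mem_cons.mp hC with h | h
            · subst h; exact Finset.insert_nonempty x B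
            · exact hne C (by simp [h])
          · rw [List.pairwise_cons]
            refine ⟨?_, (List.pairwise_cons.mp (List.pairwise_cons.mp hpw).2).2⟩
            intro C hC
            rw [Finset.insert_eq, Finset.disjoint_union_left]
            exact ⟨Finset.disjoint_singleton_left.mpr
              (Finset.disjoint_left.mp (hArest C (by simp [hC])) hx), hBrest C hC⟩
          · rw [lunion_cons, lunion_cons, lunion_cons, Finset.insert_eq,
              Finset.union_assoc]
    · rw [flip_nmem rest hx]
      have hgt : Good x rest := good_tail ⟨hne, hpw, hmem, hlast⟩ hx
      obtain ⟨ih1, ih2, ih3⟩ := ih hgt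
      refine ⟨?_, ?_, ?_⟩
      · intro B hB
        rcases List.mem_cons.mp hB with h | h
        · exact h ▸ hne A (by simp)
        · exact ih1 B h
      · rw [List.pairwise_cons]
        refine ⟨?_, ih2⟩
        intro B hB
        have hB' : B ⊆ lunion rest := ih3 ▸ subset_lunion hB
        exact (disjoint_lunion hArest).mono_right hB'
      · rw [lunion_cons, lunion_cons, ih3]

lemma flip_flip {x : ℕ} : ∀ {L : List (Finset ℕ)}, Good x L →
    flipOSP x (flipOSP x L) = L := by
  intro L
  induction L with
  | nil => intro _; rfl
  | cons A rest ih =>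
    intro hg
    obtain ⟨hne, hpw, hmem, hlast⟩ := hg
    have hArest : ∀ B ∈ rest, Disjoint A B := (List.pairwise_cons.mp hpw).1
    by_cases hx : x ∈ A
    · by_cases h2 : 2 ≤ A.card
      · rw [flip_mem_big rest hx h2, flip_singl (A.erase x) rest,
          Finset.insert_erase hx]
      · have hA : A = {x} := eq_singleton_of_small hx h2
        subst hA
        match rest with
        | [] => exact absurd (hlast {x} rfl) (by simp)
        | B :: rest' =>
          rw [flip_singl B rest']
          have hxB : x ∉ B := Finset.disjoint_left.mp (hArest B (by simp)) hx
          have hBc : 2 ≤ (insert x B).card := by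
            rw [Finset.card_insert_of_notMem hxB]
            have := Finset.card_pos.mpr (hne B (by simp))
            omega
          rw [flip_mem_big rest' (Finset.mem_insert_self x B) hBc,
            Finset.erase_insert hxB]
    · rw [flip_nmem rest hx, flip_nmem (flipOSP x rest) hx,
        ih (good_tail ⟨hne, hpw, hmem, hlast⟩ hx)]

lemma mem_Fset_of {n x : ℕ} {M : List (Finset ℕ)} (hxr : x ∈ Finset.range (n+1))
    (h : ∀ A, M.getLast? = some A → x ∉ A ∨ A.card ≠ 1) : x ∈ Fset n M := by
  unfold Fset
  cases hM : M.getLast? with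
  | none => exact hxr
  | some A =>
    rcases h A hM with h' | h'
    · by_cases hc : A.card = 1 <;> simp [hc, hxr, h']
    · simp [h', hxr]

lemma mem_Fset_flip {n x : ℕ} (hxr : x ∈ Finset.range (n+1)) :
    ∀ {L : List (Finset ℕ)}, Good x L → x ∈ Fset n (flipOSP x L) := by
  intro L
  induction L with
  | nil => intro _; simp [flipOSP, Fset, hxr]
  | cons A rest ih =>
    intro hg
    obtain ⟨hne, hpw, hmem, hlast⟩ := hg
    have hArest : ∀ B ∈ rest, Disjoint A B := (List.pairwise_cons.mp hpw).1
    by_cases hx : x ∈ A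
    · by_cases h2 : 2 ≤ A.card
      · rw [flip_mem_big rest hx h2]
        apply mem_Fset_of hxr
        intro C hC
        left
        match rest with
        | [] =>
          simp at hC
          subst hC
          exact Finset.notMem_erase x A
        | B :: rest' =>
          rw [List.getLast?_cons_cons, List.getLast?_cons_cons] at hC
          have hCm : C ∈ B :: rest' := List.mem_of_mem_getLast? hC
          exact Finset.disjoint_left.mp (hArest C hCm) hx
      · have hA : A = {x} := eq_singleton_of_small hx h2
        subst hA
        match rest with
        | [] => exact absurd (hlast {x} rfl) (by simp)
        | B :: rest' =>
          rw [flip_singl B rest']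
          apply mem_Fset_of hxr
          intro C hC
          have hxB : x ∉ B := Finset.disjoint_left.mp (hArest B (by simp)) hx
          match rest' with
          | [] =>
            simp at hC
            subst hC
            right
            rw [Finset.card_insert_of_notMem hxB]
            have := Finset.card_pos.mpr (hne B (by simp))
            omega
          | D :: rest'' =>
            rw [List.getLast?_cons_cons] at hC
            have hCm : C ∈ D :: rest'' := List.mem_of_mem_getLast? hC
            left
            have : Disjoint ({x} : Finset ℕ) C :=
              hArest C (by simp [List.mem_cons.mp hCm])
            exact Finset.disjoint_singleton_left.mp this
    · rw [flip_nmem rest hx]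
      have hgt : Good x rest := good_tail ⟨hne, hpw, hmem, hlast⟩ hx
      have hrne : rest ≠ [] := by
        intro h; subst h; exact absurd hgt.2.2.1 (by simp [lunion_nil])
      have hfne : flipOSP x rest ≠ [] := flip_ne_nil hrne
      have := ih hgt
      unfold Fset at this ⊢
      rw [getLast?_cons_ne A hfne]
      exact this

lemma not_subset_singleton {x : ℕ} {B : Finset ℕ} (hB : B.Nonempty) (hxB : x ∉ B) :
    ¬ B ⊆ ({x} : Finset ℕ) := by
  intro h
  obtain ⟨y, hy⟩ := hB
  have := Finset.mem_singleton.mp (h hy)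
  subst this
  exact hxB hy

lemma toPairs_cons (A : Finset ℕ) (L : List (Finset ℕ)) :
    toPairs (A :: L) = (A, A) :: toPairs L := rfl

lemma dlAux_cons (S acc A B : Finset ℕ) (rest : RawPOSP) :
    dlAux S acc ((A, B) :: rest) =
      if B ⊆ S then dlAux S (acc ∪ A) rest
      else (acc ∪ A, B \ S) :: dlAux S ∅ rest := rfl

lemma colorsP_cons (p : Finset ℕ × Finset ℕ) (σ : RawPOSP) :
    colorsP (p :: σ) = p.2 ∪ colorsP σ := rfl

lemma dl_flip_eq {x : ℕ} : ∀ {L : List (Finset ℕ)}, Good x L → ∀ acc,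
    dlAux {x} acc (toPairs L) = dlAux {x} acc (toPairs (flipOSP x L)) := by
  intro L
  induction L with
  | nil => intro _ acc; rfl
  | cons A rest ih =>
    intro hg acc
    obtain ⟨hne, hpw, hmem, hlast⟩ := hg
    have hArest : ∀ B ∈ rest, Disjoint A B := (List.pairwise_cons.mp hpw).1
    by_cases hx : x ∈ A
    · by_cases h2 : 2 ≤ A.card
      · rw [flip_mem_big rest hx h2]
        have hen : (A.erase x).Nonempty := by
          rw [← Finset.card_pos, Finset.card_erase_of_mem hx]; omega
        have hAe : ¬ A ⊆ ({x} : Finset ℕ) := by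
          intro h
          have := Finset.card_le_card h
          simp at this; omega
        have hee : ¬ (A.erase x) ⊆ ({x} : Finset ℕ) :=
          not_subset_singleton hen (Finset.notMem_erase x A)
        rw [toPairs_cons, toPairs_cons, toPairs_cons, dlAux_cons, dlAux_cons,
          if_neg hAe, if_pos (Finset.Subset.refl _), dlAux_cons, if_neg hee]
        congr 2
        · rw [Finset.union_assoc, ← Finset.insert_eq, Finset.insert_erase hx]
        · rw [← Finset.erase_eq, ← Finset.erase_eq,
            Finset.erase_eq_of_notMem (Finset.notMem_erase x A)]
      · have hA : A = {x} := eq_singleton_of_small hx h2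
        subst hA
        match rest with
        | [] => exact absurd (hlast {x} rfl) (by simp)
        | B :: rest' =>
          rw [flip_singl B rest']
          have hxB : x ∉ B := Finset.disjoint_left.mp (hArest B (by simp)) hx
          have hBne : B.Nonempty := hne B (by simp)
          have hBs : ¬ B ⊆ ({x} : Finset ℕ) := not_subset_singleton hBne hxB
          have hiBs : ¬ (insert x B) ⊆ ({x} : Finset ℕ) := by
            intro h
            exact hBs ((Finset.subset_insert x B).trans h)
          rw [toPairs_cons, toPairs_cons, toPairs_cons, dlAux_cons,
            if_pos (Finset.Subset.refl _), dlAux_cons, if_neg hBs, dlAux_cons,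
            if_neg hiBs]
          congr 2
          · rw [Finset.union_assoc, ← Finset.insert_eq]
          · rw [← Finset.erase_eq, ← Finset.erase_eq, Finset.erase_insert hxB,
              Finset.erase_eq_of_notMem hxB]
    · rw [flip_nmem rest hx]
      have hAs : ¬ A ⊆ ({x} : Finset ℕ) :=
        not_subset_singleton (hne A (by simp)) hx
      rw [toPairs_cons, toPairs_cons, dlAux_cons, dlAux_cons, if_neg hAs,
        if_neg hAs, ih (good_tail ⟨hne, hpw, hmem, hlast⟩ hx) ∅]

lemma colors_dl {x : ℕ} : ∀ {L : List (Finset ℕ)}, (∀ B ∈ L, B.Nonempty) →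
    (∀ A, L.getLast? = some A → A ≠ ({x} : Finset ℕ)) → ∀ acc,
    colorsP (dlAux {x} acc (toPairs L)) = lunion L \ {x} := by
  intro L
  induction L with
  | nil => intro _ _ acc; simp [lunion_nil, colorsP, toPairs, dlAux]
  | cons A rest ih =>
    intro hne hlast acc
    by_cases hS : A ⊆ ({x} : Finset ℕ)
    · have hA : A = {x} := Finset.Subset.antisymm hS
        (Finset.singleton_subset_iff.mpr
          (by obtain ⟨y, hy⟩ := hne A (by simp)
              have := Finset.mem_singleton.mp (hS hy); subst this; exact hy))
      have hrne : rest ≠ [] := by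
        intro h; subst h
        exact absurd hA (hlast A rfl)
      rw [toPairs_cons, dlAux_cons, if_pos hS]
      rw [ih (fun B hB => hne B (by simp [hB]))
        (fun B hB => hlast B (by rw [getLast?_cons_ne A hrne]; exact hB)) _]
      rw [lunion_cons, hA, Finset.union_sdiff_distrib]
      simp
    · rw [toPairs_cons, dlAux_cons, if_neg hS, colorsP_cons]
      have htl : colorsP (dlAux {x} ∅ (toPairs rest)) = lunion rest \ {x} := by
        apply ih (fun B hB => hne B (by simp [hB]))
        intro B hB
        match rest with
        | [] => simp at hB
        | C :: r =>
          exact hlast B (by rw [List.getLast?_cons_cons]; exact hB)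
      rw [htl, lunion_cons, Finset.union_sdiff_distrib]

end Aux8

open Aux8

/-- The flip `F(σ,x)` is a well-defined ordered set partition of `[n]`, `x ∈ F(F(σ,x))`,
`F(F(σ,x),x) = σ`, and `σ` and `F(σ,x)` share the common `(n−1)`-dimensional face
`dl(σ,{x}) = dl(F(σ,x),{x})`. -/
theorem statement8 (n : ℕ) (L : List (Finset ℕ)) (hL : IsOSP (Finset.range (n + 1)) L)
    (x : ℕ) (hx : x ∈ Fset n L) :
    IsOSP (Finset.range (n + 1)) (flipOSP x L) ∧
    x ∈ Fset n (flipOSP x L) ∧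
    flipOSP x (flipOSP x L) = L ∧
    dl (toPairs L) {x} = dl (toPairs (flipOSP x L)) {x} ∧
    (colorsP (dl (toPairs L) {x})).card = n := by
  obtain ⟨hne, hpw, hlun⟩ := hL
  -- x ∈ range and last block ≠ {x}
  have hbasic : x ∈ Finset.range (n+1) ∧
      ∀ A, L.getLast? = some A → A ≠ ({x} : Finset ℕ) := by
    unfold Fset at hx
    cases hM : L.getLast? with
    | none => rw [hM] at hx; exact ⟨hx, by simp [hM]⟩
    | some A =>
      rw [hM] at hx
      have hx : x ∈ (if A.card = 1 then Finset.range (n+1) \ A else Finset.range (n+1)) := hx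
      by_cases hc : A.card = 1
      · rw [if_pos hc] at hx
        obtain ⟨h1, h2⟩ := Finset.mem_sdiff.mp hx
        refine ⟨h1, fun B hB hBx => ?_⟩
        rw [Option.some_inj] at hB
        subst hB; subst hBx
        exact h2 (Finset.mem_singleton_self x)
      · rw [if_neg hc] at hx
        refine ⟨hx, fun B hB hBx => ?_⟩
        rw [Option.some_inj] at hB
        subst hB; rw [hBx] at hc; simp at hc
  obtain ⟨hxr, hlast⟩ := hbasic
  have hg : Good x L := ⟨hne, hpw, by rw [hlun]; exact hxr, hlast⟩
  obtain ⟨f1, f2, f3⟩ := flip_good hg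
  refine ⟨⟨f1, f2, by rw [f3, hlun]⟩, mem_Fset_flip hxr hg, flip_flip hg, ?_, ?_⟩
  · exact dl_flip_eq hg ∅
  · rw [show dl (toPairs L) {x} = dlAux {x} ∅ (toPairs L) from rfl,
      colors_dl hne hlast ∅, hlun, Finset.card_sdiff_of_subset (by simpa using hxr)]
    simp
end

section
/- Let Σ = (x_0,…,x_k) be a tuple of distinct elements of [n] and σ an ordered set partition of [n] for which level(σ,Σ) is defined. Then level(σ,Σ) ∈ F(σ), level(F(σ,level(σ,Σ)),Σ) is defined, and level(F(σ,level(σ,Σ)),Σ) = level(σ,Σ). Consequently the standard matching M_Σ, defined by M_Σ(σ) := F(σ,level(σ,Σ)), is an involution on the set of ordered set partitions of [n] for which level is defined, and gives a well-defined matching in Γ_n. -/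
open Finset

lemma aux_lunion_cons {α : Type*} [DecidableEq α] (A : Finset α) (L : List (Finset α)) :
    lunion (A :: L) = A ∪ lunion L := rfl

lemma aux_lunion_append {α : Type*} [DecidableEq α] (P Q : List (Finset α)) :
    lunion (P ++ Q) = lunion P ∪ lunion Q := by
  induction P with
  | nil => simp [lunion]
  | cons A P ih => simp [aux_lunion_cons, ih, union_assoc]

lemma aux_mem_lunion {α : Type*} [DecidableEq α] {x : α} {L : List (Finset α)} :
    x ∈ lunion L ↔ ∃ B ∈ L, x ∈ B := by
  induction L with
  | nil => simp [lunion]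
  | cons A L ih => simp [lunion] at ih ⊢; rw [ih]

lemma aux_flip_append {x : ℕ} {P M : List (Finset ℕ)} (h : ∀ B ∈ P, x ∉ B) :
    flipOSP x (P ++ M) = P ++ flipOSP x M := by
  induction P with
  | nil => simp
  | cons A P ih =>
    have hA : x ∉ A := h A (by simp)
    simp only [List.cons_append, flipOSP, if_neg hA]
    rw [ih (fun B hB => h B (by simp [hB]))]

lemma aux_exists_decomp {x : ℕ} {L : List (Finset ℕ)} (h : x ∈ lunion L) :
    ∃ P C R, L = P ++ C :: R ∧ x ∈ C ∧ ∀ B ∈ P, x ∉ B := by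
  induction L with
  | nil => simp [lunion] at h
  | cons A L ih =>
    by_cases hA : x ∈ A
    · exact ⟨[], A, L, by simp, hA, by simp⟩
    · have : x ∈ lunion L := by
        simp [lunion] at h; rcases h with h | h; exact absurd h hA; simpa [lunion]
      obtain ⟨P, C, R, h1, h2, h3⟩ := ih this
      exact ⟨A :: P, C, R, by simp [h1], h2, by
        intro B hB; rcases List.mem_cons.1 hB with rfl | hB; exact hA; exact h3 B hB⟩

lemma aux_levelAux_append {x : ℕ} (s1 : List ℕ) (s2 : List ℕ) (B : Finset ℕ)
    (l2 : List (Finset ℕ)) (hB : B ≠ {x}) :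
    levelAux (s1 ++ x :: s2) ((s1.map fun y => ({y} : Finset ℕ)) ++ B :: l2) = some x := by
  induction s1 with
  | nil => simp [levelAux, hB]
  | cons z s1 ih => simpa [levelAux] using ih

lemma aux_levelAux_some {s : List ℕ} {l : List (Finset ℕ)} {x : ℕ}
    (h : levelAux s l = some x) :
    ∃ s1 s2 B l2, s = s1 ++ x :: s2 ∧
      l = (s1.map fun y => ({y} : Finset ℕ)) ++ B :: l2 ∧ B ≠ {x} := by
  induction s generalizing l with
  | nil => simp [levelAux] at h
  | cons z zs ih =>
    match l with
    | [] => simp [levelAux] at h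
    | A :: As =>
      by_cases hA : A = {z}
      · rw [levelAux, if_pos hA] at h
        obtain ⟨s1, s2, B, l2, h1, h2, h3⟩ := ih h
        exact ⟨z :: s1, s2, B, l2, by simp [h1], by simp [hA, h2], h3⟩
      · rw [levelAux, if_neg hA] at h
        obtain rfl : z = x := by simpa using h
        exact ⟨[], zs, A, As, by simp, by simp, hA⟩

lemma aux_reconcile {x : ℕ} : ∀ (P Q : List (Finset ℕ)) (C B : Finset ℕ)
    (R T : List (Finset ℕ)), P ++ C :: R = Q ++ B :: T → x ∈ C →
    (∀ D ∈ T, x ∉ D) →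
    (P = Q ∧ C = B ∧ R = T) ∨ ∃ R1, R = R1 ++ B :: T ∧ Q = P ++ C :: R1 := by
  intro P
  induction P with
  | nil =>
    intro Q C B R T h hx hT
    match Q with
    | [] => simp_all
    | D :: Q' =>
      simp only [List.nil_append, List.cons_append, List.cons.injEq] at h
      exact Or.inr ⟨Q', h.2, by simp [h.1]⟩
  | cons A P ih =>
    intro Q C B R T h hx hT
    match Q with
    | [] =>
      exfalso
      simp only [List.cons_append, List.nil_append, List.cons.injEq] at h
      have : C ∈ T := by
        have : C ∈ P ++ C :: R := by simp
        rw [h.2] at this; exact this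
      exact hT C this hx
    | D :: Q' =>
      simp only [List.cons_append, List.cons.injEq] at h
      rcases ih Q' C B R T h.2 hx hT with ⟨h1, h2, h3⟩ | ⟨R1, h1, h2⟩
      · exact Or.inl ⟨by simp [h.1, h1], h2, h3⟩
      · exact Or.inr ⟨R1, h1, by simp [h.1, h2]⟩

lemma aux_card2 {x : ℕ} {C : Finset ℕ} (hx : x ∈ C) (hC : C ≠ {x}) : 2 ≤ C.card := by
  obtain ⟨y, hy, hyx⟩ : ∃ y ∈ C, y ≠ x := by
    by_contra hcon
    push_neg at hcon
    exact hC (Finset.eq_singleton_iff_unique_mem.2 ⟨hx, hcon⟩)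
  exact Finset.one_lt_card.2 ⟨y, hy, x, hx, hyx⟩

lemma aux_flip_split {x : ℕ} {P R : List (Finset ℕ)} {C : Finset ℕ}
    (hP : ∀ B ∈ P, x ∉ B) (hx : x ∈ C) (hC : C ≠ {x}) :
    flipOSP x (P ++ C :: R) = P ++ {x} :: C.erase x :: R := by
  rw [aux_flip_append hP]
  simp [flipOSP, hx, aux_card2 hx hC]

lemma aux_flip_split_inv {x : ℕ} {P R : List (Finset ℕ)} {C : Finset ℕ}
    (hP : ∀ B ∈ P, x ∉ B) (hx : x ∈ C) :
    flipOSP x (P ++ {x} :: C.erase x :: R) = P ++ C :: R := by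
  rw [aux_flip_append hP]
  simp [flipOSP, Finset.insert_erase hx]

lemma aux_flip_merge {x : ℕ} {P R : List (Finset ℕ)} {D : Finset ℕ}
    (hP : ∀ B ∈ P, x ∉ B) :
    flipOSP x (P ++ {x} :: D :: R) = P ++ insert x D :: R := by
  rw [aux_flip_append hP]
  simp [flipOSP]

lemma aux_flip_merge_inv {x : ℕ} {P R : List (Finset ℕ)} {D : Finset ℕ}
    (hP : ∀ B ∈ P, x ∉ B) (hxD : x ∉ D) (hD : D.Nonempty) :
    flipOSP x (P ++ insert x D :: R) = P ++ {x} :: D :: R := by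
  rw [aux_flip_append hP]
  have h2 : 2 ≤ (insert x D).card := by
    rw [Finset.card_insert_of_notMem hxD]
    have := Finset.card_pos.2 hD
    omega
  simp [flipOSP, h2, Finset.erase_insert hxD, Finset.mem_insert_self]

lemma aux_isosp_split {A : Finset ℕ} {P R : List (Finset ℕ)} {C : Finset ℕ} {x : ℕ}
    (h : IsOSP A (P ++ C :: R)) (hx : x ∈ C) (hC : C ≠ {x}) :
    IsOSP A (P ++ {x} :: C.erase x :: R) := by
  obtain ⟨hne, hpw, hun⟩ := h
  refine ⟨?_, ?_, ?_⟩
  · intro B hB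
    rcases List.mem_append.1 hB with hB | hB
    · exact hne B (by simp [hB])
    · rcases hB with _ | ⟨_, hB⟩
      · exact ⟨x, Finset.mem_singleton_self x⟩
      rcases hB with _ | ⟨_, hB⟩
      · obtain ⟨y, hy, hyx⟩ : ∃ y ∈ C, y ≠ x := by
          by_contra hcon; push_neg at hcon
          exact hC (Finset.eq_singleton_iff_unique_mem.2 ⟨hx, hcon⟩)
        exact ⟨y, Finset.mem_erase.2 ⟨hyx, hy⟩⟩
      · exact hne B (List.mem_append.2 (Or.inr (List.mem_cons_of_mem _ hB)))
  · rw [List.pairwise_append] at hpw ⊢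
    obtain ⟨hP, hCR, hPCR⟩ := hpw
    rw [List.pairwise_cons] at hCR
    obtain ⟨hCd, hR⟩ := hCR
    refine ⟨hP, ?_, ?_⟩
    · rw [List.pairwise_cons, List.pairwise_cons]
      refine ⟨?_, ⟨?_, hR⟩⟩
      · intro B hB
        rcases hB with _ | ⟨_, hB⟩
        · simp [Finset.disjoint_singleton_left]
        · exact Finset.disjoint_singleton_left.2
            (Finset.disjoint_left.1 (hCd B hB) hx)
      · intro B hB
        exact Finset.disjoint_of_subset_left (Finset.erase_subset x C) (hCd B hB)
    · intro a ha b hb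
      have haC := hPCR a ha C (by simp)
      rcases hb with _ | ⟨_, hb⟩
      · exact Finset.disjoint_of_subset_right (by simp [Finset.singleton_subset_iff, hx]) haC
      rcases hb with _ | ⟨_, hb⟩
      · exact Finset.disjoint_of_subset_right (Finset.erase_subset x C) haC
      · exact hPCR a ha b (List.mem_cons_of_mem _ hb)
  · have hkey : ({x} : Finset ℕ) ∪ (C.erase x ∪ lunion R) = C ∪ lunion R := by
      rw [← union_assoc, ← Finset.insert_eq, Finset.insert_erase hx]
    rw [aux_lunion_append, aux_lunion_cons, aux_lunion_cons, hkey]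
    rw [aux_lunion_append, aux_lunion_cons] at hun
    exact hun

lemma aux_isosp_merge {A : Finset ℕ} {P R : List (Finset ℕ)} {D : Finset ℕ} {x : ℕ}
    (h : IsOSP A (P ++ {x} :: D :: R)) :
    IsOSP A (P ++ insert x D :: R) := by
  obtain ⟨hne, hpw, hun⟩ := h
  refine ⟨?_, ?_, ?_⟩
  · intro B hB
    rcases List.mem_append.1 hB with hB | hB
    · exact hne B (by simp [hB])
    · rcases hB with _ | ⟨_, hB⟩
      · exact Finset.insert_nonempty x D
      · exact hne B (List.mem_append.2 (Or.inr (List.mem_cons_of_mem _ (List.mem_cons_of_mem _ hB))))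
  · rw [List.pairwise_append] at hpw ⊢
    obtain ⟨hP, hCR, hPCR⟩ := hpw
    rw [List.pairwise_cons] at hCR
    obtain ⟨hXd, hDR⟩ := hCR
    rw [List.pairwise_cons] at hDR
    obtain ⟨hDd, hR⟩ := hDR
    have hins : (insert x D : Finset ℕ) ⊆ {x} ∪ D := by
      intro y hy; rcases Finset.mem_insert.1 hy with rfl | hy <;> simp [hy]
    refine ⟨hP, ?_, ?_⟩
    · rw [List.pairwise_cons]
      refine ⟨?_, hR⟩
      intro B hB
      refine Finset.disjoint_of_subset_left hins ?_
      rw [Finset.disjoint_union_left]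
      exact ⟨hXd B (by simp [hB]), hDd B hB⟩
    · intro a ha b hb
      rcases hb with _ | ⟨_, hb⟩
      · refine Finset.disjoint_of_subset_right hins ?_
        rw [Finset.disjoint_union_right]
        exact ⟨hPCR a ha {x} (by simp), hPCR a ha D (by simp)⟩
      · exact hPCR a ha b (List.mem_cons_of_mem _ (List.mem_cons_of_mem _ hb))
  · have hkey : (insert x D : Finset ℕ) ∪ lunion R = {x} ∪ (D ∪ lunion R) := by
      rw [Finset.insert_eq, union_assoc]
    rw [aux_lunion_append, aux_lunion_cons, hkey]
    rw [aux_lunion_append, aux_lunion_cons, aux_lunion_cons] at hun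
    exact hun

lemma aux_mem_Fset {n x : ℕ} {L : List (Finset ℕ)} (hxr : x ∈ Finset.range (n+1))
    (h : ∀ A, L.getLast? = some A → A.card = 1 → x ∉ A) : x ∈ Fset n L := by
  unfold Fset
  split
  · next A heq =>
    by_cases h1 : A.card = 1
    · rw [if_pos h1]
      exact Finset.mem_sdiff.2 ⟨hxr, h A heq h1⟩
    · rw [if_neg h1]; exact hxr
  · exact hxr

lemma aux_level_of_suffix {Sig : List ℕ} {x : ℕ} {s1 s2 : List ℕ} {B' : Finset ℕ}
    (M' : List (Finset ℕ)) (hs : Sig.reverse = s1 ++ x :: s2) (hB' : B' ≠ {x}) :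
    levelFn Sig (M' ++ B' :: (s1.map (fun y => ({y} : Finset ℕ))).reverse) = some x := by
  unfold levelFn
  rw [hs]
  have hrev : (M' ++ B' :: (s1.map (fun y => ({y} : Finset ℕ))).reverse).reverse
      = (s1.map fun y => ({y} : Finset ℕ)) ++ B' :: M'.reverse := by
    simp
  rw [hrev]
  exact aux_levelAux_append s1 s2 B' M'.reverse hB'

lemma aux_main (n : ℕ) (Sig : List ℕ) (hnd : Sig.Nodup)
    (hsub : ∀ y ∈ Sig, y ∈ Finset.range (n + 1))
    (L : List (Finset ℕ)) (hL : IsOSP (Finset.range (n+1)) L) (x : ℕ)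
    (hx : levelFn Sig L = some x) :
    x ∈ Fset n L ∧ IsOSP (Finset.range (n+1)) (flipOSP x L) ∧
      levelFn Sig (flipOSP x L) = some x ∧ flipOSP x (flipOSP x L) = L ∧
      (flipOSP x L).length ≠ L.length := by
  obtain ⟨s1, s2, B, l2, hs, hl, hB⟩ := aux_levelAux_some hx
  set T : List (Finset ℕ) := (s1.map (fun y => ({y} : Finset ℕ))).reverse with hT
  have hLQ : L = l2.reverse ++ B :: T := by
    rw [← List.reverse_reverse L, hl]
    simp [hT]
  have hnds : (s1 ++ x :: s2).Nodup := hs ▸ (List.nodup_reverse.2 hnd)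
  have hxs1 : x ∉ s1 := fun hmem =>
    (List.disjoint_of_nodup_append hnds) hmem List.mem_cons_self
  have hxT : ∀ D ∈ T, x ∉ D := by
    intro D hD
    rw [hT, List.mem_reverse, List.mem_map] at hD
    obtain ⟨y, hy, rfl⟩ := hD
    intro hxy
    rw [Finset.mem_singleton] at hxy
    exact hxs1 (hxy ▸ hy)
  have hxSig : x ∈ Sig := by
    rw [← List.mem_reverse, hs]
    exact List.mem_append.2 (Or.inr List.mem_cons_self)
  have hxrange : x ∈ Finset.range (n+1) := hsub x hxSig
  have hxL : x ∈ lunion L := by rw [hL.2.2]; exact hxrange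
  obtain ⟨P, C, R, hdec, hxC, hP⟩ := aux_exists_decomp hxL
  have hFset : x ∈ Fset n L := by
    refine aux_mem_Fset hxrange ?_
    intro A hA h1
    rw [← List.head?_reverse, hl] at hA
    match s1, hA with
    | [], hA =>
      obtain rfl : B = A := by simpa using hA
      obtain ⟨b, rfl⟩ := Finset.card_eq_one.1 h1
      intro hxb
      exact hB (by rw [Finset.mem_singleton.1 hxb])
    | z :: s1', hA =>
      obtain rfl : ({z} : Finset ℕ) = A := by simpa using hA
      intro hxz
      rw [Finset.mem_singleton] at hxz
      exact hxs1 (by simp [hxz])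
  subst hdec
  have hCdisj : ∀ D ∈ R, Disjoint C D :=
    (List.pairwise_cons.1 (List.pairwise_append.1 hL.2.1).2.1).1
  rcases aux_reconcile P l2.reverse C B R T hLQ hxC hxT with
    ⟨hPQ, rfl, rfl⟩ | ⟨R1, hR, hQ⟩
  · -- C = B, R = T
    have hCne : C ≠ {x} := hB
    have hflip : flipOSP x (P ++ C :: T) = P ++ {x} :: C.erase x :: T :=
      aux_flip_split hP hxC hCne
    refine ⟨hFset, ?_, ?_, ?_, ?_⟩
    · rw [hflip]; exact aux_isosp_split hL hxC hCne
    · rw [hflip]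
      have hshape : P ++ {x} :: C.erase x :: T = (P ++ [{x}]) ++ C.erase x :: T := by simp
      rw [hshape]
      refine aux_level_of_suffix _ hs ?_
      intro hcon
      exact (Finset.notMem_erase x C) (hcon ▸ Finset.mem_singleton_self x)
    · rw [hflip]; exact aux_flip_split_inv hP hxC
    · rw [hflip]; simp
  · -- R = R1 ++ B :: T
    by_cases hCx : C = {x}
    · subst hCx
      match R1, hR with
      | [], hR =>
        obtain rfl : R = B :: T := by simpa using hR
        have hxB : x ∉ B :=
          Finset.disjoint_singleton_left.1 (hCdisj B (by simp))
        have hBne : B.Nonempty := hL.1 B (by simp)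
        have hflip : flipOSP x (P ++ {x} :: B :: T) = P ++ insert x B :: T :=
          aux_flip_merge hP
        have hins : insert x B ≠ {x} := by
          intro hcon
          obtain ⟨b, hb⟩ := hBne
          have : b = x := Finset.mem_singleton.1 (hcon ▸ Finset.mem_insert_of_mem hb)
          exact hxB (this ▸ hb)
        refine ⟨hFset, ?_, ?_, ?_, ?_⟩
        · rw [hflip]; exact aux_isosp_merge hL
        · rw [hflip]; exact aux_level_of_suffix P hs hins
        · rw [hflip]; exact aux_flip_merge_inv hP hxB hBne
        · rw [hflip]; simp
      | D :: R1', hR =>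
        obtain rfl : R = D :: (R1' ++ B :: T) := by simpa using hR
        have hxD : x ∉ D :=
          Finset.disjoint_singleton_left.1 (hCdisj D (by simp))
        have hDne : D.Nonempty := hL.1 D (by simp)
        have hflip : flipOSP x (P ++ {x} :: D :: (R1' ++ B :: T))
            = P ++ insert x D :: (R1' ++ B :: T) := aux_flip_merge hP
        refine ⟨hFset, ?_, ?_, ?_, ?_⟩
        · rw [hflip]; exact aux_isosp_merge hL
        · rw [hflip]
          have hshape : P ++ insert x D :: (R1' ++ B :: T)
              = (P ++ insert x D :: R1') ++ B :: T := by simp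
          rw [hshape]
          exact aux_level_of_suffix _ hs hB
        · rw [hflip]; exact aux_flip_merge_inv hP hxD hDne
        · rw [hflip]; simp
    · have hflip : flipOSP x (P ++ C :: R) = P ++ {x} :: C.erase x :: R :=
        aux_flip_split hP hxC hCx
      refine ⟨hFset, ?_, ?_, ?_, ?_⟩
      · rw [hflip]; exact aux_isosp_split hL hxC hCx
      · rw [hflip, hR]
        have hshape : P ++ {x} :: C.erase x :: (R1 ++ B :: T)
            = (P ++ {x} :: C.erase x :: R1) ++ B :: T := by simp
        rw [hshape]
        exact aux_level_of_suffix _ hs hB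
      · rw [hflip]; exact aux_flip_split_inv hP hxC
      · rw [hflip]; simp

/-- If `level(σ,Σ)` is defined then it lies in `F(σ)`, `level` is preserved by the
corresponding flip, and the flip is an involution; consequently the standard matching
`M_Σ` is a well-defined matching in `Γ_n`. -/
theorem statement10 (n : ℕ) (Sig : List ℕ) (hnd : Sig.Nodup)
    (hsub : ∀ y ∈ Sig, y ∈ Finset.range (n + 1)) :
    (∀ (σ : OSPn n) (x : ℕ), levelFn Sig σ.1 = some x →
      x ∈ Fset n σ.1 ∧
      IsOSP (Finset.range (n + 1)) (flipOSP x σ.1) ∧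
      levelFn Sig (flipOSP x σ.1) = some x ∧
      flipOSP x (flipOSP x σ.1) = σ.1) ∧
    IsMatchingSet (Gamma n) (MSigma n Sig) := by
  have MAIN := fun (L : List (Finset ℕ)) (hL : IsOSP (Finset.range (n+1)) L)
    (x : ℕ) (hx : levelFn Sig L = some x) => aux_main n Sig hnd hsub L hL x hx
  constructor
  · intro σ x hx
    obtain ⟨h1, h2, h3, h4, _⟩ := MAIN σ.1 σ.2 x hx
    exact ⟨h1, h2, h3, h4⟩
  · constructor
    · rintro e ⟨σ, τ, x, hlev, hτ, rfl⟩
      obtain ⟨h1, h2, h3, h4, h5⟩ := MAIN σ.1 σ.2 x hlev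
      rw [SimpleGraph.mem_edgeSet]
      refine ⟨?_, Or.inl ⟨x, h1, hτ⟩⟩
      intro hcon
      exact h5 (by rw [← hτ, hcon])
    · have KEY : ∀ e ∈ MSigma n Sig, ∀ v : OSPn n, v ∈ e →
          ∃ x, levelFn Sig v.1 = some x ∧
            ∃ w : OSPn n, w.1 = flipOSP x v.1 ∧ e = s(v, w) := by
        rintro e ⟨σ, τ, x, hlev, hτ, rfl⟩ v hv
        rcases Sym2.mem_iff.1 hv with rfl | rfl
        · exact ⟨x, hlev, τ, hτ, rfl⟩
        · obtain ⟨h1, h2, h3, h4, h5⟩ := MAIN σ.1 σ.2 x hlev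
          exact ⟨x, by rw [hτ]; exact h3, σ, by rw [hτ]; exact h4.symm, Sym2.eq_swap⟩
      intro e he f hf v hve hvf
      obtain ⟨x, hx, w, hw, rfl⟩ := KEY e he v hve
      obtain ⟨x', hx', w', hw', rfl⟩ := KEY f hf v hvf
      obtain rfl : x = x' := by rw [hx] at hx'; exact Option.some.inj hx'
      obtain rfl : w = w' := Subtype.ext (by rw [hw, hw'])
      rfl
end
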